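/- For all real h_d ≥ 0 and complex h_i with |h_i| ≥ 1, log(2) + log(1 + (h_d + 2|h_i|)²) − log(1 + (h_d + |h_i|/2)²/2) ≤ 6·log(2). -/

import Mathlib

theorem three_user_six_bit_gap (h_d : ℝ) (h_i : ℂ) (hd : 0 ≤ h_d) (hi : 1 ≤ ‖h_i‖) :
    Real.log 2 + Real.log (1 + (h_d + 2 * ‖h_i‖) ^ 2)
      - Real.log (1 + (h_d + ‖h_i‖ / 2) ^ 2 / 2)
    ≤ 6 * Real.log 2 := by
  set a := ‖h_i‖ with ha
  have ha0 : (0:ℝ) ≤ a := le_trans zero_le_one hi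
  have key : Real.log (1 + (h_d + 2 * a) ^ 2)
      ≤ Real.log (32 * (1 + (h_d + a / 2) ^ 2 / 2)) := by
    apply Real.log_le_log (by positivity)
    nlinarith [sq_nonneg (h_d + a/2), sq_nonneg h_d, mul_nonneg hd ha0]
  have h32 : Real.log (32 * (1 + (h_d + a / 2) ^ 2 / 2))
      = 5 * Real.log 2 + Real.log (1 + (h_d + a / 2) ^ 2 / 2) := by
    rw [Real.log_mul (by norm_num) (by positivity)]
    have : (32:ℝ) = 2 ^ 5 := by norm_num
    rw [this, Real.log_pow]
    push_cast
    ring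
  linarith [key, h32.le]
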